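/- Let p ∈ (0,1), |ψ⟩ = √p|0⟩ + √(1−p)|1⟩, ρ₀ = ½I the maximally mixed qubit state, and ρ₁ = |ψ⟩⟨ψ|. Then for any ε ∈ (0,1) and all n ≥ ⌈log₂(1/ε)⌉ + 1, inf{ Tr(Z[ρ₁^{⊗n}] E) : E Hermitian on (ℂ²)^{⊗n}, 0 ≤ E ≤ I, Tr(Z[ρ₀^{⊗n}] E) ≥ 1−ε } = 0. -/

import Mathlib

open Matrix Complex Set Filter

noncomputable section

/-- Number of 1s in a bit string. -/
def ones {n : ℕ} (x : Fin n → Fin 2) : ℕ := (Finset.univ.filter fun i => x i = 1).card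

/-- The `n`-fold tensor power of a one-qubit operator, as a matrix indexed by bit strings. -/
def mpow (n : ℕ) (ρ : Matrix (Fin 2) (Fin 2) ℂ) :
    Matrix (Fin n → Fin 2) (Fin n → Fin 2) ℂ :=
  Matrix.of fun x y => ∏ i, ρ (x i) (y i)

/-- The parity operator ω = σ_z^{⊗n}: it multiplies a computational basis vector by
(-1)^(number of 1s). -/
def parityOp (n : ℕ) : Matrix (Fin n → Fin 2) (Fin n → Fin 2) ℂ :=
  Matrix.diagonal fun x => (-1 : ℂ) ^ ones x

/-- The ℤ₂-twirling Z[X] = ½ (X + ωXω). -/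
def twirl {n : ℕ} (X : Matrix (Fin n → Fin 2) (Fin n → Fin 2) ℂ) :
    Matrix (Fin n → Fin 2) (Fin n → Fin 2) ℂ :=
  (2 : ℂ)⁻¹ • (X + parityOp n * X * parityOp n)

/-- Rank-one projection |ψ⟩⟨ψ| on one qubit. -/
def projv (ψ : Fin 2 → ℂ) : Matrix (Fin 2) (Fin 2) ℂ := vecMulVec ψ (star ψ)

/-- Rank-one projection |ψ⟩⟨ψ| on n qubits. -/
def projN {n : ℕ} (ψ : (Fin n → Fin 2) → ℂ) :
    Matrix (Fin n → Fin 2) (Fin n → Fin 2) ℂ := vecMulVec ψ (star ψ)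

def ket0 : Fin 2 → ℂ := ![1, 0]

def ket1 : Fin 2 → ℂ := ![0, 1]

/-- The qubit state √p |0⟩ + e^{iφ} √(1-p) |1⟩. -/
def qubit (p φ : ℝ) : Fin 2 → ℂ :=
  ![(Real.sqrt p : ℂ), Complex.exp (Complex.I * φ) * (Real.sqrt (1 - p) : ℂ)]

/-- The qubit state √p |0⟩ + √(1-p) |1⟩. -/
def qubitR (p : ℝ) : Fin 2 → ℂ := ![(Real.sqrt p : ℂ), (Real.sqrt (1 - p) : ℂ)]

open scoped ComplexOrder

/-- The set of type-II error probabilities Tr(σ₁ E) over POVM elements 0 ≤ E ≤ I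
(Loewner order) whose type-I error is at most ε, i.e. Tr(σ₀ E) ≥ 1-ε. -/
def errSet (n : ℕ) (σ0 σ1 : Matrix (Fin n → Fin 2) (Fin n → Fin 2) ℂ) (ε : ℝ) : Set ℝ :=
  { x | ∃ E : Matrix (Fin n → Fin 2) (Fin n → Fin 2) ℂ,
      E.IsHermitian ∧ E.PosSemidef ∧ (1 - E).PosSemidef ∧
      1 - ε ≤ ((σ0 * E).trace).re ∧ x = ((σ1 * E).trace).re }

/-- The maximally mixed qubit state ½ I. -/
def mmix : Matrix (Fin 2) (Fin 2) ℂ := (2 : ℂ)⁻¹ • 1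

section AuxLemmas

open scoped ComplexOrder

variable {ι : Type*} [Fintype ι] [DecidableEq ι]

omit [DecidableEq ι] in
lemma vecMulVec_mulVec' (a b x : ι → ℂ) : vecMulVec a b *ᵥ x = (b ⬝ᵥ x) • a := by
  funext i
  simp [Matrix.mulVec, vecMulVec_apply, dotProduct, Finset.mul_sum, Finset.sum_mul, mul_comm, mul_assoc]
  ring_nf
  exact Finset.sum_congr rfl fun j _ => by ring

omit [DecidableEq ι] in
lemma vecMulVec_mul_vecMulVec' (a b c d : ι → ℂ) :
    vecMulVec a b * vecMulVec c d = (b ⬝ᵥ c) • vecMulVec a d := by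
  ext i j
  simp [Matrix.mul_apply, vecMulVec_apply, dotProduct, Finset.sum_mul, Finset.mul_sum]
  exact Finset.sum_congr rfl fun k _ => by ring

omit [DecidableEq ι] in
lemma trace_vecMulVec' (a b : ι → ℂ) : (vecMulVec a b).trace = b ⬝ᵥ a := by
  simp [Matrix.trace, Matrix.diag, vecMulVec_apply, dotProduct, mul_comm]

omit [DecidableEq ι] in
lemma trace_vecMulVec_mul (a : ι → ℂ) (E : Matrix ι ι ℂ) :
    (vecMulVec a (star a) * E).trace = star a ⬝ᵥ (E *ᵥ a) := by
  simp only [Matrix.trace, Matrix.diag, Matrix.mul_apply, vecMulVec_apply, dotProduct,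
    Matrix.mulVec, dotProduct]
  rw [Finset.sum_comm]
  exact Finset.sum_congr rfl fun y _ => by
    rw [Finset.mul_sum]
    exact Finset.sum_congr rfl fun x _ => by simp [Pi.star_apply]; ring

omit [Fintype ι] [DecidableEq ι] in
lemma hermitian_vecMulVec_star (a : ι → ℂ) : (vecMulVec a (star a)).IsHermitian := by
  ext i j
  simp [Matrix.conjTranspose_apply, vecMulVec_apply, mul_comm]

omit [DecidableEq ι] in
lemma posSemidef_vecMulVec_star (a : ι → ℂ) : (vecMulVec a (star a)).PosSemidef := by
  refine Matrix.PosSemidef.of_dotProduct_mulVec_nonneg (hermitian_vecMulVec_star a) fun x => ?_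
  rw [vecMulVec_mulVec']
  rw [dotProduct_smul]
  have h1 : star x ⬝ᵥ a = star (star a ⬝ᵥ x) := by
    rw [star_dotProduct]
  rw [smul_eq_mul, h1, RCLike.star_def, Complex.mul_conj]
  exact_mod_cast Complex.normSq_nonneg _

lemma sum_prod_fin2 {n : ℕ} (f : Fin 2 → ℂ) :
    ∑ x : Fin n → Fin 2, ∏ i, f (x i) = (f 0 + f 1) ^ n := by
  have h : f 0 + f 1 = ∑ b : Fin 2, f b := by simp [Fin.sum_univ_two]
  rw [h, ← Fintype.piFinset_univ,
    ← Finset.prod_univ_sum (fun _ : Fin n => (Finset.univ : Finset (Fin 2))) (fun _ b => f b),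
    Finset.prod_const, Finset.card_univ, Fintype.card_fin]

lemma neg_one_pow_ones {n : ℕ} (x : Fin n → Fin 2) :
    ((-1 : ℂ)) ^ ones x = ∏ i, (-1 : ℂ) ^ ((x i : ℕ)) := by
  rw [ones, Finset.card_filter, ← Finset.prod_pow_eq_pow_sum]
  refine Finset.prod_congr rfl fun i _ => ?_
  have h : ∀ b : Fin 2, (if b = 1 then 1 else 0) = (b : ℕ) := by decide
  rw [h]

lemma dot_prod_pow {n : ℕ} (a b : Fin 2 → ℂ) :
    (star fun x : Fin n → Fin 2 => ∏ i, a (x i)) ⬝ᵥ (fun x : Fin n → Fin 2 => ∏ i, b (x i))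
      = (star (a 0) * b 0 + star (a 1) * b 1) ^ n := by
  simp only [dotProduct, Pi.star_apply, star_prod, ← Finset.prod_mul_distrib]
  exact sum_prod_fin2 (fun c => star (a c) * b c)

lemma mpow_projv {n : ℕ} (ψ : Fin 2 → ℂ) :
    mpow n (projv ψ) = vecMulVec (fun x => ∏ i, ψ (x i)) (star fun x => ∏ i, ψ (x i)) := by
  ext x y
  simp only [mpow, projv, Matrix.of_apply, vecMulVec_apply, Pi.star_apply, star_prod]
  rw [← Finset.prod_mul_distrib]

lemma parity_conj_vecMulVec {n : ℕ} (a b : (Fin n → Fin 2) → ℂ) :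
    parityOp n * vecMulVec a b * parityOp n
      = vecMulVec (fun x => (-1 : ℂ) ^ ones x * a x) (fun y => (-1 : ℂ) ^ ones y * b y) := by
  ext x y
  simp only [parityOp]
  rw [Matrix.mul_diagonal, Matrix.diagonal_mul]
  simp only [vecMulVec_apply]
  ring

lemma twirl_mmix {n : ℕ} : twirl (mpow n mmix) = ((2 : ℂ) ^ n)⁻¹ • 1 := by
  have h : mpow n mmix = ((2 : ℂ) ^ n)⁻¹ • 1 := by
    ext x y
    simp only [mpow, mmix, Matrix.of_apply, Matrix.smul_apply, Matrix.one_apply,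
      smul_eq_mul]
    by_cases hxy : x = y
    · subst hxy
      simp [Matrix.one_apply, Finset.prod_mul_distrib, mul_inv]
    · obtain ⟨i, hi⟩ := Function.ne_iff.mp hxy
      rw [Finset.prod_eq_zero (Finset.mem_univ i) (by simp [Matrix.one_apply, hi])]
      simp [Matrix.one_apply, hxy]
  have hpar : parityOp n * parityOp n = 1 := by
    rw [parityOp, Matrix.diagonal_mul_diagonal]
    ext x y
    simp only [Matrix.diagonal_apply, Matrix.one_apply]
    by_cases hxy : x = y <;> simp [hxy, ← pow_add, ← two_mul, pow_mul]
  rw [twirl, h]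
  rw [Matrix.mul_smul, Matrix.mul_one, Matrix.smul_mul, hpar]
  rw [← two_smul ℂ, smul_smul, smul_smul]
  norm_num

end AuxLemmas

/-- For ρ₀ = ½I and ρ₁ = |ψ⟩⟨ψ| with |ψ⟩ = √p|0⟩+√(1-p)|1⟩, p ∈ (0,1),
for any ε ∈ (0,1) and all n ≥ ⌈log₂(1/ε)⌉ + 1, the minimal type-II error probability
under ℤ₂-invariant measurements with type-I error at most ε is zero. -/
theorem typeII_error_vanishes_mixed_null (p : ℝ) (hp : p ∈ Set.Ioo (0 : ℝ) 1) :
    ∀ ε ∈ Set.Ioo (0 : ℝ) 1, ∀ n : ℕ, ⌈Real.logb 2 (1 / ε)⌉₊ + 1 ≤ n →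
      sInf (errSet n (twirl (mpow n mmix)) (twirl (mpow n (projv (qubitR p)))) ε) = 0 := by
  obtain ⟨hp0, hp1⟩ := hp
  intro ε hε n hn
  obtain ⟨hε0, hε1⟩ := hε
  have hn1 : 1 ≤ n := le_trans (Nat.le_add_left 1 _) hn
  set Ψ : (Fin n → Fin 2) → ℂ := fun x => ∏ i, qubitR p (x i) with hΨdef
  set Φ : (Fin n → Fin 2) → ℂ := fun x => (-1 : ℂ) ^ ones x * Ψ x with hΦdef
  set c : ℝ := (2 * p - 1) ^ n with hcdef
  have hc2 : c ^ 2 < 1 := by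
    have h1 : (2 * p - 1) ^ 2 < 1 := by nlinarith
    have h2 : c ^ 2 = ((2 * p - 1) ^ 2) ^ n := by
      rw [hcdef, ← pow_mul, ← pow_mul, Nat.mul_comm]
    rw [h2]
    exact pow_lt_one₀ (sq_nonneg _) h1 (by omega)
  set t : ℝ := Real.sqrt (1 - c ^ 2) with htdef
  have ht0 : 0 < t := Real.sqrt_pos.mpr (by linarith)
  have ht2 : t ^ 2 = 1 - c ^ 2 := Real.sq_sqrt (by linarith)
  have htC : (t : ℂ) ≠ 0 := by exact_mod_cast ht0.ne'
  set v : (Fin n → Fin 2) → ℂ := fun x => (t : ℂ)⁻¹ * (Φ x - (c : ℂ) * Ψ x) with hvdef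
  -- product form of Φ
  have hΦprod : Φ = fun x => ∏ i, ((-1 : ℂ) ^ ((x i : ℕ)) * qubitR p (x i)) := by
    funext x
    simp only [hΦdef, hΨdef]
    rw [neg_one_pow_ones, ← Finset.prod_mul_distrib]
  -- single-qubit values
  have hv0 : qubitR p 0 = ((Real.sqrt p : ℝ) : ℂ) := rfl
  have hv1 : qubitR p 1 = ((Real.sqrt (1 - p) : ℝ) : ℂ) := rfl
  have hs0 : star (qubitR p 0) * qubitR p 0 = ((p : ℝ) : ℂ) := by
    rw [hv0, RCLike.star_def, Complex.conj_ofReal, ← Complex.ofReal_mul,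
      Real.mul_self_sqrt hp0.le]
  have hs1 : star (qubitR p 1) * qubitR p 1 = ((1 - p : ℝ) : ℂ) := by
    rw [hv1, RCLike.star_def, Complex.conj_ofReal, ← Complex.ofReal_mul,
      Real.mul_self_sqrt (by linarith)]
  -- inner products
  have hΨΨ : star Ψ ⬝ᵥ Ψ = 1 := by
    rw [hΨdef]
    rw [dot_prod_pow]
    rw [hs0, hs1]
    rw [← Complex.ofReal_add]
    norm_num
  have hΨΦ : star Ψ ⬝ᵥ Φ = (c : ℂ) := by
    rw [hΨdef, hΦprod]
    have h := dot_prod_pow (n := n) (qubitR p) (fun j : Fin 2 => (-1 : ℂ) ^ ((j : ℕ)) * qubitR p j)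
    rw [h]
    have e : star (qubitR p 0) * ((-1 : ℂ) ^ (((0 : Fin 2) : ℕ)) * qubitR p 0)
        + star (qubitR p 1) * ((-1 : ℂ) ^ (((1 : Fin 2) : ℕ)) * qubitR p 1)
        = ((2 * p - 1 : ℝ) : ℂ) := by
      have : (((0 : Fin 2) : ℕ)) = 0 := rfl
      rw [this]
      have : (((1 : Fin 2) : ℕ)) = 1 := rfl
      rw [this]
      rw [pow_zero, pow_one, one_mul]
      have : star (qubitR p 1) * ((-1 : ℂ) * qubitR p 1) = -(star (qubitR p 1) * qubitR p 1) := by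
        ring
      rw [this, hs0, hs1, ← Complex.ofReal_neg, ← Complex.ofReal_add]
      norm_num
      ring_nf
    rw [e, hcdef, Complex.ofReal_pow]
  have hΦΨ : star Φ ⬝ᵥ Ψ = (c : ℂ) := by
    rw [star_dotProduct, hΨΦ, RCLike.star_def, Complex.conj_ofReal]
  have hΦΦ : star Φ ⬝ᵥ Φ = 1 := by
    rw [hΦprod]
    have h := dot_prod_pow (n := n) (fun j : Fin 2 => (-1 : ℂ) ^ ((j : ℕ)) * qubitR p j)
      (fun j : Fin 2 => (-1 : ℂ) ^ ((j : ℕ)) * qubitR p j)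
    rw [h]
    have e : star ((-1 : ℂ) ^ (((0 : Fin 2) : ℕ)) * qubitR p 0) * ((-1 : ℂ) ^ (((0 : Fin 2) : ℕ)) * qubitR p 0)
        + star ((-1 : ℂ) ^ (((1 : Fin 2) : ℕ)) * qubitR p 1) * ((-1 : ℂ) ^ (((1 : Fin 2) : ℕ)) * qubitR p 1)
        = 1 := by
      have e0 : (((0 : Fin 2) : ℕ)) = 0 := rfl
      have e1 : (((1 : Fin 2) : ℕ)) = 1 := rfl
      rw [e0, e1, pow_zero, pow_one, one_mul]
      have k : star ((-1 : ℂ) * qubitR p 1) * ((-1 : ℂ) * qubitR p 1)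
          = star (qubitR p 1) * qubitR p 1 := by
        rw [star_mul']
        have hsn : star (-1 : ℂ) = -1 := by simp
        rw [hsn]
        ring
      rw [k, hs0, hs1, ← Complex.ofReal_add]
      norm_num
    rw [e, one_pow]
  -- dot products with v
  have hvsmul : v = (t : ℂ)⁻¹ • (Φ - (c : ℂ) • Ψ) := by
    funext x
    simp only [hvdef, Pi.smul_apply, Pi.sub_apply, smul_eq_mul]
  have hstC : star ((t : ℂ)⁻¹) = (t : ℂ)⁻¹ := by
    rw [star_inv₀, RCLike.star_def, Complex.conj_ofReal]
  have hscC : star ((c : ℂ)) = (c : ℂ) := by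
    rw [RCLike.star_def, Complex.conj_ofReal]
  have hsv : ∀ w : (Fin n → Fin 2) → ℂ,
      star v ⬝ᵥ w = (t : ℂ)⁻¹ * (star Φ ⬝ᵥ w - (c : ℂ) * (star Ψ ⬝ᵥ w)) := by
    intro w
    rw [hvsmul, star_smul, star_sub, star_smul, smul_dotProduct,
      sub_dotProduct, smul_dotProduct, hstC, hscC, smul_eq_mul, smul_eq_mul]
  have hdv : ∀ w : (Fin n → Fin 2) → ℂ,
      star w ⬝ᵥ v = (t : ℂ)⁻¹ * (star w ⬝ᵥ Φ - (c : ℂ) * (star w ⬝ᵥ Ψ)) := by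
    intro w
    rw [hvsmul, dotProduct_smul, dotProduct_sub, dotProduct_smul,
      smul_eq_mul, smul_eq_mul]
  have h1c2 : ((1 : ℂ) - (c : ℂ) * (c : ℂ)) = (t : ℂ) ^ 2 := by
    have : ((t ^ 2 : ℝ) : ℂ) = (t : ℂ) ^ 2 := by push_cast; ring
    rw [← this, ht2]
    push_cast
    ring
  have hvΨ : star v ⬝ᵥ Ψ = 0 := by rw [hsv, hΦΨ, hΨΨ]; ring
  have hΨv : star Ψ ⬝ᵥ v = 0 := by rw [hdv, hΨΦ, hΨΨ]; ring
  have hvΦ : star v ⬝ᵥ Φ = (t : ℂ) := by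
    rw [hsv, hΦΦ, hΨΦ, h1c2]
    field_simp
  have hΦv : star Φ ⬝ᵥ v = (t : ℂ) := by
    rw [hdv, hΦΦ, hΦΨ, h1c2]
    field_simp
  have hvv : star v ⬝ᵥ v = 1 := by
    rw [hsv, hΦv, hΨv]
    field_simp
    ring
  -- the POVM element
  set P : Matrix (Fin n → Fin 2) (Fin n → Fin 2) ℂ :=
    vecMulVec Ψ (star Ψ) + vecMulVec v (star v) with hPdef
  set E : Matrix (Fin n → Fin 2) (Fin n → Fin 2) ℂ := 1 - P with hEdef
  have hPherm : P.IsHermitian := (hermitian_vecMulVec_star Ψ).add (hermitian_vecMulVec_star v)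
  have hEherm : E.IsHermitian := by
    rw [hEdef]
    exact Matrix.isHermitian_one.sub hPherm
  have hP2 : P * P = P := by
    rw [hPdef]
    rw [Matrix.add_mul, Matrix.mul_add, Matrix.mul_add,
      vecMulVec_mul_vecMulVec', vecMulVec_mul_vecMulVec',
      vecMulVec_mul_vecMulVec', vecMulVec_mul_vecMulVec', hΨΨ, hΨv, hvΨ, hvv,
      one_smul, one_smul, zero_smul, zero_smul]
    abel
  have hE2 : E * E = E := by
    rw [hEdef]
    calc (1 - P) * (1 - P) = 1 - P - P + P * P := by noncomm_ring
      _ = 1 - P := by rw [hP2]; abel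
  have hEpsd : E.PosSemidef := by
    have h := Matrix.posSemidef_conjTranspose_mul_self E
    rwa [hEherm, hE2] at h
  have h1Epsd : ((1 : Matrix (Fin n → Fin 2) (Fin n → Fin 2) ℂ) - E).PosSemidef := by
    have h : (1 : Matrix (Fin n → Fin 2) (Fin n → Fin 2) ℂ) - E = P := by
      rw [hEdef, sub_sub_cancel]
    rw [h, hPdef]
    exact (posSemidef_vecMulVec_star Ψ).add (posSemidef_vecMulVec_star v)
  -- E annihilates Ψ and Φ
  have hEΨ : E *ᵥ Ψ = 0 := by
    rw [hEdef, hPdef, Matrix.sub_mulVec, Matrix.add_mulVec, Matrix.one_mulVec,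
      vecMulVec_mulVec', vecMulVec_mulVec', hΨΨ, hvΨ, one_smul, zero_smul]
    abel
  have htv : (t : ℂ) • v = Φ - (c : ℂ) • Ψ := by
    funext x
    simp only [hvdef, Pi.smul_apply, Pi.sub_apply, smul_eq_mul]
    field_simp
  have hEΦ : E *ᵥ Φ = 0 := by
    rw [hEdef, hPdef, Matrix.sub_mulVec, Matrix.add_mulVec, Matrix.one_mulVec,
      vecMulVec_mulVec', vecMulVec_mulVec', hΨΦ, hvΦ, htv]
    abel
  -- the twirled state ρ₁
  have hσ1 : twirl (mpow n (projv (qubitR p)))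
      = (2 : ℂ)⁻¹ • (vecMulVec Ψ (star Ψ) + vecMulVec Φ (star Φ)) := by
    rw [twirl, mpow_projv]
    show (2 : ℂ)⁻¹ • (vecMulVec Ψ (star Ψ) + parityOp n * vecMulVec Ψ (star Ψ) * parityOp n)
      = _
    rw [parity_conj_vecMulVec]
    have ha : (fun x => (-1 : ℂ) ^ ones x * Ψ x) = Φ := hΦdef.symm
    have hb : (fun y => (-1 : ℂ) ^ ones y * star Ψ y) = star Φ := by
      funext y
      rw [hΦdef]
      simp only [Pi.star_apply, star_mul']
      have hsp : star ((-1 : ℂ) ^ ones y) = (-1 : ℂ) ^ ones y := by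
        rw [star_pow]
        norm_num
      rw [hsp]
    rw [ha, hb]
  -- traces
  have htr1 : ((twirl (mpow n (projv (qubitR p))) * E).trace) = 0 := by
    rw [hσ1, Matrix.smul_mul, Matrix.trace_smul, Matrix.add_mul, Matrix.trace_add,
      trace_vecMulVec_mul, trace_vecMulVec_mul, hEΨ, hEΦ]
    simp
  have hcard : (Fintype.card (Fin n → Fin 2)) = 2 ^ n := by
    simp [Fintype.card_fun]
  have hTrE : E.trace = ((2 : ℂ) ^ n) - 2 := by
    rw [hEdef, Matrix.trace_sub, Matrix.trace_one, hPdef, Matrix.trace_add,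
      trace_vecMulVec', trace_vecMulVec', hΨΨ, hvv, hcard]
    push_cast
    ring
  have htr0 : ((twirl (mpow n mmix) * E).trace) = ((1 - 2 / 2 ^ n : ℝ) : ℂ) := by
    rw [twirl_mmix, Matrix.smul_mul, Matrix.trace_smul, Matrix.one_mul, hTrE]
    have h2n : ((2 : ℂ) ^ n) ≠ 0 := by positivity
    rw [smul_eq_mul]
    push_cast
    field_simp
  -- type-I error bound
  have hre0 : 1 - ε ≤ ((twirl (mpow n mmix) * E).trace).re := by
    rw [htr0, Complex.ofReal_re]
    have hpow : (2 : ℝ) ^ (n - 1) * 2 = 2 ^ n := by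
      rw [← pow_succ]
      congr 1
      omega
    have hlog : Real.logb 2 (1 / ε) ≤ ((n - 1 : ℕ) : ℝ) := by
      refine le_trans (Nat.le_ceil _) ?_
      exact_mod_cast Nat.le_sub_one_of_lt (by omega)
    have hineq : 1 / ε ≤ (2 : ℝ) ^ (n - 1) := by
      calc 1 / ε = (2 : ℝ) ^ Real.logb 2 (1 / ε) :=
            (Real.rpow_logb two_pos (by norm_num) (by positivity)).symm
        _ ≤ (2 : ℝ) ^ (((n - 1 : ℕ)) : ℝ) :=
            Real.rpow_le_rpow_of_exponent_le one_le_two hlog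
        _ = (2 : ℝ) ^ (n - 1 : ℕ) := Real.rpow_natCast 2 (n - 1)
    have hp1' : (0 : ℝ) < 2 ^ (n - 1) := by positivity
    have h2 : (2 : ℝ) / 2 ^ n ≤ ε := by
      rw [← hpow]
      rw [div_le_iff₀ (by positivity)]
      rw [div_le_iff₀ hε0] at hineq
      nlinarith
    linarith
  -- membership of 0
  have h0mem : (0 : ℝ) ∈ errSet n (twirl (mpow n mmix)) (twirl (mpow n (projv (qubitR p)))) ε :=
    ⟨E, hEherm, hEpsd, h1Epsd, hre0, by rw [htr1]; simp⟩
  -- lower bound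
  have hlb : ∀ x ∈ errSet n (twirl (mpow n mmix)) (twirl (mpow n (projv (qubitR p)))) ε,
      (0 : ℝ) ≤ x := by
    rintro x ⟨F, hFherm, hFpsd, h1F, htyI, rfl⟩
    rw [hσ1, Matrix.smul_mul, Matrix.trace_smul, Matrix.add_mul, Matrix.trace_add,
      trace_vecMulVec_mul, trace_vecMulVec_mul]
    have q1 := hFpsd.dotProduct_mulVec_nonneg Ψ
    have q2 := hFpsd.dotProduct_mulVec_nonneg Φ
    rw [Complex.le_def] at q1 q2
    have h2i : ((2 : ℂ)⁻¹) = (((2 : ℝ)⁻¹ : ℝ) : ℂ) := by push_cast; norm_num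
    rw [smul_eq_mul, h2i, Complex.re_ofReal_mul, Complex.add_re]
    have := q1.1
    have := q2.1
    simp only [Complex.zero_re] at *
    positivity
  exact le_antisymm
    (csInf_le ⟨0, fun y hy => hlb y hy⟩ h0mem)
    (le_csInf ⟨0, h0mem⟩ (fun y hy => hlb y hy))
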